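/- Every finite tree of pathwidth k has a path-partition of height at most 2k. -/

import Mathlib

/-- `p 0, p 1, …, p m` is a simple path in `G` (injective, consecutive vertices adjacent). -/
def IsPathSeq {V : Type} (G : SimpleGraph V) (p : ℕ → V) (m : ℕ) : Prop :=
  (∀ i j, i ≤ m → j ≤ m → p i = p j → i = j) ∧ ∀ i < m, G.Adj (p i) (p (i + 1))

/-- A vertex coloring `φ` of `G` is nonrepetitive if there is no simple path
`v₁ v₂ … v₂ᵣ` (`r ≥ 1`) in `G` with `φ(vᵢ) = φ(v_{r+i})` for all `i ∈ {1,…,r}`. -/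
def Nonrepetitive {V : Type} (G : SimpleGraph V) (φ : V → ℕ) : Prop :=
  ∀ r : ℕ, 1 ≤ r → ∀ p : ℕ → V, IsPathSeq G p (2 * r - 1) →
    ∃ i < r, φ (p i) ≠ φ (p (i + r))

/-- `G` is nonrepetitively `ℓ`-choosable: every assignment of color lists of size
at least `ℓ` admits a nonrepetitive coloring from the lists. -/
def ThueChoosable {V : Type} (G : SimpleGraph V) (ℓ : ℕ) : Prop :=
  ∀ L : V → Finset ℕ, (∀ v, ℓ ≤ (L v).card) →
    ∃ φ : V → ℕ, (∀ v, φ v ∈ L v) ∧ Nonrepetitive G φ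

/-- `B 0, …, B (m-1)` is a path decomposition of `G`: every vertex appears in some bag,
the bags containing a given vertex form an interval of indices, and each edge lies in a bag. -/
def IsPathDecomp {V : Type} (G : SimpleGraph V) {m : ℕ} (B : Fin m → Finset V) : Prop :=
  (∀ v, ∃ i, v ∈ B i) ∧
  (∀ v, ∀ i j k : Fin m, i ≤ j → j ≤ k → v ∈ B i → v ∈ B k → v ∈ B j) ∧
  (∀ u v, G.Adj u v → ∃ i, u ∈ B i ∧ v ∈ B i)

/-- `G` has a path decomposition of width at most `k`. -/
def PathwidthLE {V : Type} (G : SimpleGraph V) (k : ℕ) : Prop :=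
  ∃ (m : ℕ) (B : Fin m → Finset V), IsPathDecomp G B ∧ ∀ i, (B i).card ≤ k + 1

/-- The pathwidth of `G`: the least width of a path decomposition of `G`. -/
noncomputable def pathwidth {V : Type} (G : SimpleGraph V) : ℕ :=
  sInf {k | PathwidthLE G k}

/-- A path-partition of a tree `T`: a rooted tree `Q` (on index type `ι`) together with
a collection `P x` (`x : ι`) of vertex-disjoint paths of `T` partitioning `V(T)`, such
that `x y` is an edge of `Q` iff some edge of `T` joins a vertex of `P x` to a vertex
of `P y`. -/
structure PathPartition {V : Type} (T : SimpleGraph V) (ι : Type) where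
  Q : SimpleGraph ι
  root : ι
  isTree : Q.IsTree
  P : ι → Set V
  disjoint : ∀ x y, x ≠ y → Disjoint (P x) (P y)
  cover : ∀ v, ∃ x, v ∈ P x
  isPath : ∀ x, ∃ (m : ℕ) (f : ℕ → V), IsPathSeq T f m ∧ P x = {v | ∃ i ≤ m, f i = v}
  adj_iff : ∀ x y, Q.Adj x y ↔ x ≠ y ∧ ∃ u ∈ P x, ∃ w ∈ P y, T.Adj u w

/-- The level of a vertex `v` of `T`: the height in the rooted tree `Q` (distance from
the root) of the index `x` with `v ∈ P x`. -/
noncomputable def PathPartition.level {V ι : Type} {T : SimpleGraph V}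
    (PP : PathPartition T ι) (v : V) : ℕ :=
  PP.Q.dist PP.root (Classical.choose (PP.cover v))

/-- The minimum level of a vertex on the path `f 0, …, f m` of `T`; the base of
the path consists of its vertices of this level. -/
noncomputable def PathPartition.minLevel {V ι : Type} {T : SimpleGraph V}
    (PP : PathPartition T ι) (f : ℕ → V) (m : ℕ) : ℕ :=
  sInf {l | ∃ i ≤ m, PP.level (f i) = l}

/-- Every ascending path of `T` is `φ`-good: for every simple path `f 0, …, f m`
whose first vertex lies in its base (i.e. an ascending path enumerated from its source)
and every way of reading its color sequence as a near repetition
`x₁…x_r y₁…y_g x₁…x_r` (`r ≥ 1`, `m + 1 = 2r + g`), strictly more than `r` of the `g`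
gap vertices `f r, …, f (r+g-1)` lie in the base of the path. -/
def PathPartition.AscGood {V ι : Type} {T : SimpleGraph V}
    (PP : PathPartition T ι) (φ : V → ℕ) : Prop :=
  ∀ (m : ℕ) (f : ℕ → V), IsPathSeq T f m →
    PP.level (f 0) = PP.minLevel f m →
    ∀ r g : ℕ, 1 ≤ r → m + 1 = 2 * r + g →
      (∀ i < r, φ (f i) = φ (f (r + g + i))) →
      r < {i : ℕ | r ≤ i ∧ i < r + g ∧ PP.level (f i) = PP.minLevel f m}.ncard

namespace PfAux

open SimpleGraph

variable {V : Type} {T : SimpleGraph V}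

/-- vertices reachable from `c` by a walk staying inside `A`. -/
def WConnIn (T : SimpleGraph V) (A : Set V) (u v : V) : Prop :=
  ∃ p : T.Walk u v, ∀ x ∈ p.support, x ∈ A

def WConnOn (T : SimpleGraph V) (A : Set V) : Prop :=
  ∀ u ∈ A, ∀ v ∈ A, WConnIn T A u v

def Comp (T : SimpleGraph V) (A : Set V) (c : V) : Set V := {v | WConnIn T A c v}

def IsCompOf (T : SimpleGraph V) (A E : Set V) : Prop := ∃ c ∈ A, E = Comp T A c

lemma WConnIn.mem_left {A : Set V} {u v : V} (h : WConnIn T A u v) : u ∈ A := by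
  obtain ⟨p, hp⟩ := h; exact hp _ p.start_mem_support

lemma WConnIn.mem_right {A : Set V} {u v : V} (h : WConnIn T A u v) : v ∈ A := by
  obtain ⟨p, hp⟩ := h; exact hp _ p.end_mem_support

lemma WConnIn.refl {A : Set V} {u : V} (h : u ∈ A) : WConnIn T A u u :=
  ⟨SimpleGraph.Walk.nil, by simpa using h⟩

lemma WConnIn.symm {A : Set V} {u v : V} (h : WConnIn T A u v) : WConnIn T A v u := by
  obtain ⟨p, hp⟩ := h
  exact ⟨p.reverse, by intro x hx; exact hp x (by simpa [SimpleGraph.Walk.support_reverse] using hx)⟩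

lemma WConnIn.trans {A : Set V} {u v w : V} (h : WConnIn T A u v) (h' : WConnIn T A v w) :
    WConnIn T A u w := by
  obtain ⟨p, hp⟩ := h; obtain ⟨q, hq⟩ := h'
  refine ⟨p.append q, ?_⟩
  intro x hx
  rcases (SimpleGraph.Walk.mem_support_append_iff _ _).1 hx with h | h
  · exact hp x h
  · exact hq x h

lemma WConnIn.mono {A B : Set V} (hAB : A ⊆ B) {u v : V} (h : WConnIn T A u v) :
    WConnIn T B u v := by
  obtain ⟨p, hp⟩ := h; exact ⟨p, fun x hx => hAB (hp x hx)⟩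

lemma comp_subset {A : Set V} {c : V} : Comp T A c ⊆ A := fun _ h => h.mem_right

lemma mem_comp_self {A : Set V} {c : V} (h : c ∈ A) : c ∈ Comp T A c := WConnIn.refl h

lemma mem_comp_of_support {A : Set V} {c v : V} (p : T.Walk c v) (hp : ∀ x ∈ p.support, x ∈ A)
    {x : V} (hx : x ∈ p.support) : x ∈ Comp T A c := by
  classical
  refine ⟨p.takeUntil x hx, fun y hy => hp y ?_⟩
  exact (SimpleGraph.Walk.support_takeUntil_subset p hx) hy

lemma comp_wconn {A : Set V} {c : V} : WConnOn T (Comp T A c) := by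
  rintro u hu v hv
  obtain ⟨p, hp⟩ := hu
  obtain ⟨q, hq⟩ := hv
  refine ⟨p.reverse.append q, ?_⟩
  intro x hx
  rcases (SimpleGraph.Walk.mem_support_append_iff _ _).1 hx with h | h
  · exact mem_comp_of_support p hp (by simpa [SimpleGraph.Walk.support_reverse] using h)
  · exact mem_comp_of_support q hq h

lemma comp_eq_of_mem {A : Set V} {c d : V} (h : d ∈ Comp T A c) : Comp T A d = Comp T A c := by
  ext v
  constructor
  · intro hv; exact Set.mem_setOf.2 ((Set.mem_setOf.1 h).trans hv)
  · intro hv; exact Set.mem_setOf.2 ((Set.mem_setOf.1 h).symm.trans hv)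

lemma IsCompOf.wconn {A E : Set V} (h : IsCompOf T A E) : WConnOn T E := by
  obtain ⟨c, _, rfl⟩ := h; exact comp_wconn

lemma IsCompOf.subset {A E : Set V} (h : IsCompOf T A E) : E ⊆ A := by
  obtain ⟨c, _, rfl⟩ := h; exact comp_subset

lemma IsCompOf.absorb {A E : Set V} (h : IsCompOf T A E) {a b : V}
    (ha : a ∈ E) (hb : b ∈ A) (hab : T.Adj a b) : b ∈ E := by
  obtain ⟨c, hc, rfl⟩ := h
  refine (Set.mem_setOf.1 ha).trans ⟨SimpleGraph.Walk.cons hab SimpleGraph.Walk.nil, ?_⟩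
  intro x hx
  simp only [SimpleGraph.Walk.support_cons, SimpleGraph.Walk.support_nil, List.mem_cons,
    List.mem_singleton, List.not_mem_nil, or_false] at hx
  rcases hx with rfl | rfl
  · exact ha.mem_right
  · exact hb

lemma IsCompOf.eq_comp_of_mem {A E : Set V} (h : IsCompOf T A E) {d : V} (hd : d ∈ E) :
    E = Comp T A d := by
  obtain ⟨c, hc, rfl⟩ := h
  exact (comp_eq_of_mem hd).symm

lemma IsCompOf.disjoint {A E E' : Set V} (h : IsCompOf T A E) (h' : IsCompOf T A E')
    (hne : E ≠ E') : Disjoint E E' := by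
  rw [Set.disjoint_left]
  intro v hv hv'
  exact hne ((h.eq_comp_of_mem hv).trans (h'.eq_comp_of_mem hv').symm)

/-- exit edge from a component of `S \ R` to `R`. -/
lemma exists_exit {S R E : Set V} (hS : WConnOn T S) (hRS : R ⊆ S)
    (hE : IsCompOf T (S \ R) E) (hR : R.Nonempty) :
    ∃ a ∈ E, ∃ b ∈ R, T.Adj a b := by
  obtain ⟨c, hc, rfl⟩ := hE
  obtain ⟨r₀, hr₀⟩ := hR
  obtain ⟨p, hp⟩ := hS c hc.1 r₀ (hRS hr₀)
  -- walk from inside E to outside E; find first exit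
  have key : ∀ {u v : V} (q : T.Walk u v), (∀ x ∈ q.support, x ∈ S) →
      u ∈ Comp T (S \ R) c → v ∉ Comp T (S \ R) c →
      ∃ a ∈ Comp T (S \ R) c, ∃ b ∈ R, T.Adj a b := by
    intro u v q
    induction q with
    | nil => intro _ hu hv; exact absurd hu hv
    | cons hadj q ih =>
      rename_i a b w
      intro hsup ha hv
      by_cases hb : b ∈ Comp T (S \ R) c
      · exact ih (fun x hx => hsup x (by simp [SimpleGraph.Walk.support_cons, hx])) hb hv
      · have hbS : b ∈ S := hsup b (by simp [SimpleGraph.Walk.support_cons])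
        have hbR : b ∈ R := by
          by_contra hbR
          have : IsCompOf T (S \ R) (Comp T (S \ R) c) := ⟨c, hc, rfl⟩
          exact hb (this.absorb ha ⟨hbS, hbR⟩ hadj)
        exact ⟨a, ha, b, hbR, hadj⟩
  refine key p hp (mem_comp_self hc) ?_
  intro hr
  exact (comp_subset hr).2 hr₀

end PfAux

namespace PfAux
open SimpleGraph
variable {V : Type} {T : SimpleGraph V}

lemma getVert_inj {u v : V} (p : T.Walk u v) (hp : p.IsPath) :
    ∀ i j, i ≤ p.length → j ≤ p.length → p.getVert i = p.getVert j → i = j := by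
  induction p with
  | nil => intro i j hi hj _; simp at hi hj; omega
  | cons hadj q ih =>
    rename_i a b w
    intro i j hi hj hij
    rcases hp.of_cons with hq
    have hnot : a ∉ q.support := by
      have := hp.support_nodup
      simp [SimpleGraph.Walk.support_cons] at this
      exact this.1
    match i, j with
    | 0, 0 => rfl
    | 0, (j+1) =>
      exfalso
      apply hnot
      rw [SimpleGraph.Walk.mem_support_iff_exists_getVert]
      exact ⟨j, by simpa [SimpleGraph.Walk.getVert_cons_succ] using hij.symm,
        by simpa [SimpleGraph.Walk.length_cons] using hj⟩
    | (i+1), 0 =>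
      exfalso
      apply hnot
      rw [SimpleGraph.Walk.mem_support_iff_exists_getVert]
      exact ⟨i, by simpa [SimpleGraph.Walk.getVert_cons_succ] using hij,
        by simpa [SimpleGraph.Walk.length_cons] using hi⟩
    | (i+1), (j+1) =>
      have : i = j := by
        apply ih hq i j
        · simpa [SimpleGraph.Walk.length_cons] using hi
        · simpa [SimpleGraph.Walk.length_cons] using hj
        · simpa [SimpleGraph.Walk.getVert_cons_succ] using hij
      omega

/-- a path (as a walk) gives an `IsPathSeq` whose image is the support. -/
lemma pathseq_of_walk {u v : V} (p : T.Walk u v) (hp : p.IsPath) :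
    IsPathSeq T p.getVert p.length ∧
      {x | ∃ i ≤ p.length, p.getVert i = x} = {x | x ∈ p.support} := by
  constructor
  · exact ⟨getVert_inj p hp, fun i hi => p.adj_getVert_succ hi⟩
  · ext x
    simp only [Set.mem_setOf_eq]
    rw [SimpleGraph.Walk.mem_support_iff_exists_getVert]
    constructor
    · rintro ⟨i, hi, h⟩; exact ⟨i, h, hi⟩
    · rintro ⟨i, h, hi⟩; exact ⟨i, hi, h⟩

/-- consecutive subwalks of a path sequence. -/
lemma pathseq_walk {f : ℕ → V} {m : ℕ} (hf : IsPathSeq T f m) :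
    ∀ d i, i + d ≤ m → ∃ w : T.Walk (f i) (f (i + d)),
      ∀ x ∈ w.support, x ∈ {v | ∃ i ≤ m, f i = v} := by
  intro d
  induction d with
  | zero => intro i hi; exact ⟨SimpleGraph.Walk.nil, by simp; exact ⟨i, by omega, rfl⟩⟩
  | succ d ih =>
    intro i hi
    obtain ⟨w, hw⟩ := ih i (by omega)
    have hadj : T.Adj (f (i + d)) (f (i + d + 1)) := hf.2 (i + d) (by omega)
    refine ⟨(w.concat hadj).copy rfl (by ring_nf), ?_⟩
    intro x hx
    simp only [SimpleGraph.Walk.support_copy, SimpleGraph.Walk.support_concat,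
      List.concat_eq_append, List.mem_append, List.mem_singleton] at hx
    rcases hx with hx | rfl
    · exact hw x hx
    · exact ⟨i + d + 1, by omega, rfl⟩

lemma pimg_wconn {f : ℕ → V} {m : ℕ} (hf : IsPathSeq T f m) :
    WConnOn T {v | ∃ i ≤ m, f i = v} := by
  rintro u ⟨i, hi, rfl⟩ v ⟨j, hj, rfl⟩
  rcases le_or_gt i j with h | h
  · obtain ⟨w, hw⟩ := pathseq_walk hf (j - i) i (by omega)
    have hij : i + (j - i) = j := by omega
    exact ⟨(w.copy rfl (by rw [hij])), by
      intro x hx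
      exact hw x (by simpa [SimpleGraph.Walk.support_copy] using hx)⟩
  · obtain ⟨w, hw⟩ := pathseq_walk hf (i - j) j (by omega)
    have hij : j + (i - j) = i := by omega
    refine WConnIn.symm ⟨(w.copy rfl (by rw [hij])), ?_⟩
    intro x hx
    exact hw x (by simpa [SimpleGraph.Walk.support_copy] using hx)

lemma pimg_nonempty {f : ℕ → V} {m : ℕ} : ({v | ∃ i ≤ m, f i = v}).Nonempty :=
  ⟨f 0, 0, by omega, rfl⟩

/-- The quotient graph forced by a collection of parts. -/
def Qf (T : SimpleGraph V) {ι : Type} (P : ι → Set V) : SimpleGraph ι where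
  Adj x y := x ≠ y ∧ ∃ u ∈ P x, ∃ w ∈ P y, T.Adj u w
  symm := by
    constructor
    rintro x y ⟨hxy, u, hu, w, hw, h⟩
    exact ⟨hxy.symm, w, hw, u, hu, h.symm⟩
  loopless := ⟨fun x h => h.1 rfl⟩

lemma qf_adj {ι : Type} {P : ι → Set V} {x y : ι} :
    (Qf T P).Adj x y ↔ x ≠ y ∧ ∃ u ∈ P x, ∃ w ∈ P y, T.Adj u w := Iff.rfl

/-- The bundle of data needed through the induction: a path partition of the
subset `S` whose root part contains `c`, with all parts at distance `≤ H` from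
the root. -/
def HasPPP (T : SimpleGraph V) (S : Set V) (c : V) (H : ℕ) : Prop :=
  ∃ (ι : Type) (root : ι) (P : ι → Set V),
    (∀ x y, x ≠ y → Disjoint (P x) (P y)) ∧
    (∀ x, P x ⊆ S) ∧
    (∀ v ∈ S, ∃ x, v ∈ P x) ∧
    (∀ x, ∃ (m : ℕ) (f : ℕ → V), IsPathSeq T f m ∧ P x = {v | ∃ i ≤ m, f i = v}) ∧
    (Qf T P).IsTree ∧
    c ∈ P root ∧
    (∀ x, (Qf T P).dist root x ≤ H)

lemma HasPPP.mono {S : Set V} {c : V} {H H' : ℕ} (h : HasPPP T S c H) (hH : H ≤ H') :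
    HasPPP T S c H' := by
  obtain ⟨ι, root, P, h1, h2, h3, h4, h5, h6, h7⟩ := h
  exact ⟨ι, root, P, h1, h2, h3, h4, h5, h6, fun x => (h7 x).trans hH⟩

end PfAux

namespace PfAux
open SimpleGraph
variable {V : Type} {T : SimpleGraph V}

section QT

variable {ι : Type} {P : ι → Set V} {S : Set V}

/-- projecting a walk of `T` inside `S` to the quotient graph. -/
lemma qf_reachable (hdisj : ∀ x y, x ≠ y → Disjoint (P x) (P y))
    (hcov : ∀ v ∈ S, ∃ x, v ∈ P x) :
    ∀ {u v : V} (p : T.Walk u v), (∀ z ∈ p.support, z ∈ S) →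
      ∀ x y, u ∈ P x → v ∈ P y → (Qf T P).Reachable x y := by
  intro u v p
  induction p with
  | nil =>
    intro _ x y hx hy
    have : x = y := by
      by_contra hne
      exact Set.disjoint_left.mp (hdisj x y hne) hx hy
    subst this; rfl
  | cons hadj q ih =>
    rename_i a b w
    intro hsup x y hx hy
    obtain ⟨z, hz⟩ := hcov b (hsup b (by simp [SimpleGraph.Walk.support_cons]))
    have hrest : (Qf T P).Reachable z y :=
      ih (fun t ht => hsup t (by simp [SimpleGraph.Walk.support_cons, ht])) z y hz hy
    by_cases hxz : x = z
    · subst hxz; exact hrest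
    · exact (SimpleGraph.Adj.reachable (qf_adj.mpr ⟨hxz, a, hx, b, hz, hadj⟩)).trans hrest

/-- a walk inside a single part cannot use an edge joining two distinct parts. -/
lemma part_walk_avoids (hdisj : ∀ x y, x ≠ y → Disjoint (P x) (P y))
    {x₀ z : ι} (hne : x₀ ≠ z) {u₀ w₁ : V} (hu₀ : u₀ ∈ P x₀) (hw₁ : w₁ ∈ P z)
    {a b : V} {y : ι} (p : T.Walk a b) (hp : ∀ t ∈ p.support, t ∈ P y) :
    s(u₀, w₁) ∉ p.edges := by
  intro he
  have h1 : u₀ ∈ p.support := SimpleGraph.Walk.fst_mem_support_of_mem_edges p he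
  have h2 : w₁ ∈ p.support := SimpleGraph.Walk.snd_mem_support_of_mem_edges p he
  have hyx : y = x₀ := by
    by_contra h
    exact Set.disjoint_left.mp (hdisj y x₀ h) (hp _ h1) hu₀
  have hyz : y = z := by
    by_contra h
    exact Set.disjoint_left.mp (hdisj y z h) (hp _ h2) hw₁
  exact hne (hyx.symm.trans hyz)

/-- lifting a walk of the quotient avoiding the quotient edge `s(x₀,z)` to a walk
of `T` avoiding the cross edge `s(u₀,w₁)`. -/
lemma qf_lift (hdisj : ∀ x y, x ≠ y → Disjoint (P x) (P y))
    (hconnP : ∀ x, WConnOn T (P x))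
    {x₀ z : ι} (hne : x₀ ≠ z) {u₀ w₁ : V} (hu₀ : u₀ ∈ P x₀) (hw₁ : w₁ ∈ P z) :
    ∀ {y x : ι} (q : (Qf T P).Walk y x), s(x₀, z) ∉ q.edges →
      ∀ b ∈ P y, ∀ a ∈ P x, ∃ p : T.Walk b a, s(u₀, w₁) ∉ p.edges := by
  intro y x q
  induction q with
  | nil =>
    intro _ b hb a ha
    obtain ⟨p, hp⟩ := hconnP _ b hb a ha
    exact ⟨p, part_walk_avoids hdisj hne hu₀ hw₁ p hp⟩
  | cons hadj q ih =>
    rename_i y y' x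
    intro hq b hb a ha
    obtain ⟨hyy', u', hu', w', hw', hadj'⟩ := qf_adj.mp hadj
    have hq' : s(x₀, z) ∉ q.edges := fun h => hq (by simp [SimpleGraph.Walk.edges_cons, h])
    obtain ⟨p₂, hp₂⟩ := ih hq' w' hw' a ha
    obtain ⟨p₁raw, hp₁raw⟩ := hconnP _ b hb u' hu'
    have hp₁ : s(u₀, w₁) ∉ p₁raw.edges :=
      part_walk_avoids hdisj hne hu₀ hw₁ p₁raw hp₁raw
    have hcross : s(u₀, w₁) ≠ s(u', w') := by
      intro h
      rcases Sym2.eq_iff.mp h with ⟨h1, h2⟩ | ⟨h1, h2⟩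
      · -- u₀ = u', w₁ = w' : then y = x₀ and y' = z
        have h3 : y = x₀ := by
          by_contra hc
          exact Set.disjoint_left.mp (hdisj y x₀ hc) (h1 ▸ hu') hu₀
        have h4 : y' = z := by
          by_contra hc
          exact Set.disjoint_left.mp (hdisj y' z hc) (h2 ▸ hw') hw₁
        have : s(x₀, z) = s(y, y') := by rw [h3, h4]
        exact hq (by rw [SimpleGraph.Walk.edges_cons]; exact this ▸ List.mem_cons_self)
      · -- u₀ = w', w₁ = u' : then y' = x₀ and y = z
        have h3 : y' = x₀ := by
          by_contra hc
          exact Set.disjoint_left.mp (hdisj y' x₀ hc) (h1 ▸ hw') hu₀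
        have h4 : y = z := by
          by_contra hc
          exact Set.disjoint_left.mp (hdisj y z hc) (h2 ▸ hu') hw₁
        have : s(x₀, z) = s(y, y') := by rw [h3, h4]; exact Sym2.eq_swap
        exact hq (by rw [SimpleGraph.Walk.edges_cons]; exact this ▸ List.mem_cons_self)
    refine ⟨p₁raw.append (SimpleGraph.Walk.cons hadj' p₂), ?_⟩
    intro he
    rw [SimpleGraph.Walk.edges_append, List.mem_append] at he
    rcases he with he | he
    · exact hp₁ he
    · rw [SimpleGraph.Walk.edges_cons, List.mem_cons] at he
      rcases he with he | he
      · exact hcross he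
      · exact hp₂ he

/-- The quotient of a tree by a partition into connected parts is a tree. -/
lemma qf_isTree (hT : T.IsTree) [Nonempty ι]
    (hdisj : ∀ x y, x ≠ y → Disjoint (P x) (P y))
    (hsub : ∀ x, P x ⊆ S) (hcov : ∀ v ∈ S, ∃ x, v ∈ P x)
    (hconnP : ∀ x, WConnOn T (P x)) (hne : ∀ x, (P x).Nonempty)
    (hS : WConnOn T S) : (Qf T P).IsTree := by
  constructor
  · -- connected
    rw [SimpleGraph.connected_iff]
    refine ⟨?_, inferInstance⟩
    intro x y
    obtain ⟨u, hu⟩ := hne x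
    obtain ⟨v, hv⟩ := hne y
    obtain ⟨p, hp⟩ := hS u (hsub x hu) v (hsub y hv)
    exact qf_reachable hdisj hcov p hp x y hu hv
  · -- acyclic
    intro x₀ cyc hcyc
    cases cyc with
    | nil => exact hcyc.ne_nil rfl
    | cons hadj q =>
      rename_i z
      obtain ⟨hne', u₀, hu₀, w₁, hw₁, hadjT⟩ := qf_adj.mp hadj
      have hqe : s(x₀, z) ∉ q.edges := by
        have := hcyc.edges_nodup
        rw [SimpleGraph.Walk.edges_cons, List.nodup_cons] at this
        exact this.1
      obtain ⟨p, hp⟩ := qf_lift hdisj hconnP hne' hu₀ hw₁ q hqe w₁ hw₁ u₀ hu₀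
      -- p : T.Walk w₁ u₀ avoiding s(u₀, w₁); contradicts that the edge is a bridge
      have hbridge : T.IsBridge s(u₀, w₁) :=
        (SimpleGraph.isAcyclic_iff_forall_adj_isBridge.mp hT.IsAcyclic) hadjT
      rw [SimpleGraph.isBridge_iff] at hbridge
      apply hbridge
      rw [SimpleGraph.reachable_delete_edges_iff_exists_walk]
      refine ⟨p.reverse, ?_⟩
      intro he
      rw [SimpleGraph.Walk.edges_reverse, List.mem_reverse] at he
      exact hp he

end QT
end PfAux

namespace PfAux
open SimpleGraph
variable {V : Type} {T : SimpleGraph V}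

/-- a single path is a path partition of itself, of height 0. -/
lemma single {S : Set V} {mR : ℕ} {fR : ℕ → V} (hfR : IsPathSeq T fR mR)
    (hReq : S = {v | ∃ i ≤ mR, fR i = v}) {c : V} (hc : c ∈ S) : HasPPP T S c 0 := by
  refine ⟨PUnit, PUnit.unit, fun _ => S, ?_, ?_, ?_, ?_, ?_, hc, ?_⟩
  · intro x y hxy; exact absurd (Subsingleton.elim x y) hxy
  · intro _; exact subset_rfl
  · intro v hv; exact ⟨PUnit.unit, hv⟩
  · intro _; exact ⟨mR, fR, hfR, hReq⟩
  · constructor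
    · rw [SimpleGraph.connected_iff]
      exact ⟨fun x y => (Subsingleton.elim x y) ▸ SimpleGraph.Reachable.refl x, inferInstance⟩
    · intro v cyc hcyc
      cases cyc with
      | nil => exact hcyc.ne_nil rfl
      | cons hadj q => exact hadj.1 (Subsingleton.elim _ _)
  · intro x
    rw [Subsingleton.elim x PUnit.unit, SimpleGraph.dist_self]

/-- The gluing lemma: a root path `Rset` in `S`, together with anchored path
partitions of height `≤ H` of each component of `S \ Rset`, gives an anchored
path partition of `S` of height `≤ H + 1`. -/
lemma glue (hT : T.IsTree) {S Rset : Set V} (hS : WConnOn T S) (hRS : Rset ⊆ S)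
    {mR : ℕ} {fR : ℕ → V} (hfR : IsPathSeq T fR mR)
    (hReq : Rset = {v | ∃ i ≤ mR, fR i = v})
    {c : V} (hc : c ∈ Rset) (H : ℕ)
    (hcomp : ∀ E, IsCompOf T (S \ Rset) E →
      ∃ cE ∈ E, HasPPP T E cE H ∧ ∃ r ∈ Rset, T.Adj r cE) :
    HasPPP T S c (H + 1) := by
  classical
  set CompT := {E : Set V // IsCompOf T (S \ Rset) E} with hCompT
  have hdata : ∀ E : CompT, ∃ cE, cE ∈ E.1 ∧ HasPPP T E.1 cE H ∧ ∃ r ∈ Rset, T.Adj r cE := by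
    rintro ⟨E, hE⟩
    obtain ⟨cE, h1, h2, h3⟩ := hcomp E hE
    exact ⟨cE, h1, h2, h3⟩
  let cE : ∀ E : CompT, V := fun E => (hdata E).choose
  have hcE : ∀ E : CompT, (cE E) ∈ E.1 := fun E => (hdata E).choose_spec.1
  have hppp : ∀ E : CompT, HasPPP T E.1 (cE E) H := fun E => (hdata E).choose_spec.2.1
  have hadjE : ∀ E : CompT, ∃ r ∈ Rset, T.Adj r (cE E) :=
    fun E => (hdata E).choose_spec.2.2
  let ιE : CompT → Type := fun E => (hppp E).choose
  let rootE : ∀ E : CompT, ιE E := fun E => (hppp E).choose_spec.choose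
  let PE : ∀ E : CompT, ιE E → Set V := fun E => (hppp E).choose_spec.choose_spec.choose
  have specE : ∀ E : CompT,
      (∀ x y, x ≠ y → Disjoint (PE E x) (PE E y)) ∧
      (∀ x, PE E x ⊆ E.1) ∧
      (∀ v ∈ E.1, ∃ x, v ∈ PE E x) ∧
      (∀ x, ∃ (m : ℕ) (f : ℕ → V), IsPathSeq T f m ∧ PE E x = {v | ∃ i ≤ m, f i = v}) ∧
      (Qf T (PE E)).IsTree ∧
      (cE E) ∈ PE E (rootE E) ∧
      (∀ x, (Qf T (PE E)).dist (rootE E) x ≤ H) :=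
    fun E => (hppp E).choose_spec.choose_spec.choose_spec
  refine ⟨Option ((E : CompT) × ιE E), none,
    (fun x => match x with | none => Rset | some ⟨E, i⟩ => PE E i), ?_, ?_, ?_, ?_, ?_, hc, ?_⟩
  · -- disjoint
    rintro (_ | ⟨E, i⟩) (_ | ⟨E', j⟩) hxy
    · exact absurd rfl hxy
    · exact Set.disjoint_left.mpr fun v hv hv' =>
        ((E'.2.subset ((specE E').2.1 j hv')).2 hv)
    · exact Set.disjoint_left.mpr fun v hv hv' =>
        ((E.2.subset ((specE E).2.1 i hv)).2 hv')
    · by_cases hEE : E = E'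
      · subst hEE
        have hij : i ≠ j := by
          intro h; subst h; exact hxy rfl
        exact (specE E).1 i j hij
      · have hd : Disjoint E.1 E'.1 :=
          E.2.disjoint E'.2 (fun h => hEE (Subtype.ext h))
        exact hd.mono ((specE E).2.1 i) ((specE E').2.1 j)
  · -- subset S
    rintro (_ | ⟨E, i⟩)
    · exact hRS
    · exact fun v hv => (E.2.subset ((specE E).2.1 i hv)).1
  · -- cover
    intro v hv
    by_cases hvR : v ∈ Rset
    · exact ⟨none, hvR⟩
    · have hvA : v ∈ S \ Rset := ⟨hv, hvR⟩
      set E₀ : CompT := ⟨Comp T (S \ Rset) v, ⟨v, hvA, rfl⟩⟩ with hE₀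
      obtain ⟨x, hx⟩ := (specE E₀).2.2.1 v (mem_comp_self hvA)
      exact ⟨some ⟨E₀, x⟩, hx⟩
  · -- isPath
    rintro (_ | ⟨E, i⟩)
    · exact ⟨mR, fR, hfR, hReq⟩
    · exact (specE E).2.2.2.1 i
  · -- isTree
    refine qf_isTree (S := S) hT ?_ ?_ ?_ ?_ ?_ hS
    · rintro (_ | ⟨E, i⟩) (_ | ⟨E', j⟩) hxy
      · exact absurd rfl hxy
      · exact Set.disjoint_left.mpr fun v hv hv' =>
          ((E'.2.subset ((specE E').2.1 j hv')).2 hv)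
      · exact Set.disjoint_left.mpr fun v hv hv' =>
          ((E.2.subset ((specE E).2.1 i hv)).2 hv')
      · by_cases hEE : E = E'
        · subst hEE
          have hij : i ≠ j := by
            intro h; subst h; exact hxy rfl
          exact (specE E).1 i j hij
        · have hd : Disjoint E.1 E'.1 :=
            E.2.disjoint E'.2 (fun h => hEE (Subtype.ext h))
          exact hd.mono ((specE E).2.1 i) ((specE E').2.1 j)
    · rintro (_ | ⟨E, i⟩)
      · exact hRS
      · exact fun v hv => (E.2.subset ((specE E).2.1 i hv)).1
    · intro v hv
      by_cases hvR : v ∈ Rset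
      · exact ⟨none, hvR⟩
      · have hvA : v ∈ S \ Rset := ⟨hv, hvR⟩
        set E₀ : CompT := ⟨Comp T (S \ Rset) v, ⟨v, hvA, rfl⟩⟩ with hE₀
        obtain ⟨x, hx⟩ := (specE E₀).2.2.1 v (mem_comp_self hvA)
        exact ⟨some ⟨E₀, x⟩, hx⟩
    · rintro (_ | ⟨E, i⟩)
      · show WConnOn T Rset
        rw [hReq]; exact pimg_wconn hfR
      · obtain ⟨m, f, hf, heq⟩ := (specE E).2.2.2.1 i
        show WConnOn T (PE E i)
        rw [heq]; exact pimg_wconn hf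
    · rintro (_ | ⟨E, i⟩)
      · show Rset.Nonempty
        rw [hReq]; exact pimg_nonempty
      · obtain ⟨m, f, hf, heq⟩ := (specE E).2.2.2.1 i
        show (PE E i).Nonempty
        rw [heq]; exact pimg_nonempty
  · -- distances
    rintro (_ | ⟨E, i⟩)
    · rw [SimpleGraph.dist_self]; omega
    · -- walk: none → some ⟨E, rootE E⟩ → ... → some ⟨E, i⟩
      obtain ⟨r, hr, hradj⟩ := hadjE E
      set Pfun : Option ((E : CompT) × ιE E) → Set V :=
        (fun x => match x with | none => Rset | some ⟨E, i⟩ => PE E i) with hPfun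
      have hreach : (Qf T (PE E)).Reachable (rootE E) i :=
        ((specE E).2.2.2.2.1).isConnected (rootE E) i
      obtain ⟨w, hw⟩ := hreach.exists_walk_length_eq_dist
      have hwlen : w.length ≤ H := by
        rw [hw]; exact (specE E).2.2.2.2.2.2 i
      -- hom from the component quotient into the big quotient
      let g : Qf T (PE E) →g Qf T Pfun :=
        ⟨fun j => some ⟨E, j⟩, by
          rintro a b ⟨hab, u, hu, v, hv, huv⟩
          refine ⟨?_, u, hu, v, hv, huv⟩
          intro h
          apply hab
          have h2 := Option.some.inj h
          exact eq_of_heq (Sigma.mk.inj_iff.mp h2).2⟩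
      have hadj0 : (Qf T Pfun).Adj none (some ⟨E, rootE E⟩) := by
        refine ⟨by simp, r, hr, cE E, (specE E).2.2.2.2.2.1, hradj⟩
      have := SimpleGraph.dist_le (SimpleGraph.Walk.cons hadj0 (w.map g))
      rw [SimpleGraph.Walk.length_cons, SimpleGraph.Walk.length_map] at this
      exact this.trans (by omega)

end PfAux

namespace PfAux
open SimpleGraph
variable {V : Type} {T : SimpleGraph V}

lemma isPath_append_of_disjoint {u v w : V} {p : T.Walk u v} {q : T.Walk v w}
    (hp : p.IsPath) (hq : q.IsPath) (hdisj : ∀ x ∈ p.support, x ∉ q.support.tail) :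
    (p.append q).IsPath := by
  rw [SimpleGraph.Walk.isPath_def, SimpleGraph.Walk.support_append]
  exact List.Nodup.append hp.support_nodup hq.support_nodup.tail hdisj

/-- path decomposition of the induced subgraph on `S` (bags contained in `S`). -/
def PD (T : SimpleGraph V) (S : Set V) {m : ℕ} (B : Fin m → Finset V) : Prop :=
  (∀ v ∈ S, ∃ i, v ∈ B i) ∧
  (∀ v : V, ∀ i j k : Fin m, i ≤ j → j ≤ k → v ∈ B i → v ∈ B k → v ∈ B j) ∧
  (∀ u v, u ∈ S → v ∈ S → T.Adj u v → ∃ i, u ∈ B i ∧ v ∈ B i) ∧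
  (∀ i, (↑(B i) : Set V) ⊆ S)

lemma pd_cross {S : Set V} {m : ℕ} {B : Fin m → Finset V} (hPD : PD T S B) (i : Fin m) :
    ∀ {u w : V} (p : T.Walk u w), (∀ x ∈ p.support, x ∈ S) →
      (∀ j, u ∈ B j → j < i) → ¬(∀ j, w ∈ B j → j < i) →
      ∃ x ∈ p.support, x ∈ B i := by
  intro u w p
  induction p with
  | nil => intro _ h1 h2; exact absurd h1 h2
  | cons hadj q ih =>
    rename_i a b ww
    intro hsup hleft hnright
    by_cases hb : ∀ j, b ∈ B j → j < i
    · obtain ⟨x, hx1, hx2⟩ :=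
        ih (fun x hx => hsup x (by simp [SimpleGraph.Walk.support_cons, hx])) hb hnright
      exact ⟨x, by simp [SimpleGraph.Walk.support_cons, hx1], hx2⟩
    · push_neg at hb
      obtain ⟨j', hbj', hij'⟩ := hb
      have haS : a ∈ S := hsup a (by simp [SimpleGraph.Walk.support_cons])
      have hbS : b ∈ S := hsup b (by simp [SimpleGraph.Walk.support_cons])
      obtain ⟨j, haj, hbj⟩ := hPD.2.2.1 a b haS hbS hadj
      have hji : j ≤ i := le_of_lt (hleft j haj)
      have hbi : b ∈ B i := hPD.2.1 b j i j' hji hij' hbj hbj'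
      exact ⟨b, by simp [SimpleGraph.Walk.support_cons], hbi⟩

end PfAux

namespace PfAux
open SimpleGraph
variable {V : Type} {T : SimpleGraph V}

theorem mainInd (hT : T.IsTree) :
    ∀ k : ℕ, ∀ S : Set V, WConnOn T S →
      ∀ (m : ℕ) (B : Fin m → Finset V), PD T S B → (∀ i, (B i).card ≤ k + 1) →
      ∀ c ∈ S, HasPPP T S c (2 * k) := by
  intro k
  induction k using Nat.strong_induction_on with
  | _ k IH =>
  intro S hS m B hPD hW c hcS
  classical
  obtain ⟨ic, hic⟩ := hPD.1 c hcS
  set NE : Finset (Fin m) := Finset.univ.filter (fun i => (B i).Nonempty) with hNEdef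
  have hNE : NE.Nonempty := ⟨ic, by simp [hNEdef]; exact ⟨c, hic⟩⟩
  set i₀ := NE.min' hNE with hi₀
  set i₁ := NE.max' hNE with hi₁
  have hB₀ : (B i₀).Nonempty := (Finset.mem_filter.mp (NE.min'_mem hNE)).2
  have hB₁ : (B i₁).Nonempty := (Finset.mem_filter.mp (NE.max'_mem hNE)).2
  obtain ⟨u, hu⟩ := hB₀
  obtain ⟨w, hw⟩ := hB₁
  have huS : u ∈ S := hPD.2.2.2 i₀ hu
  have hwS : w ∈ S := hPD.2.2.2 i₁ hw
  obtain ⟨p0, hp0⟩ := hS u huS w hwS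
  set p := p0.bypass with hpdef
  have hp : p.IsPath := p0.bypass_isPath
  have hpS : ∀ x ∈ p.support, x ∈ S := fun x hx => hp0 x (p0.support_bypass_subset hx)
  set Rset : Set V := {x | x ∈ p.support} with hRsetdef
  have hRS : Rset ⊆ S := fun x hx => hpS x hx
  have hRne : Rset.Nonempty := ⟨u, p.start_mem_support⟩
  -- the main path hits every nonempty bag
  have hhit : ∀ i : Fin m, (B i).Nonempty → ∃ x ∈ p.support, x ∈ B i := by
    intro i hBi
    have hiNE : i ∈ NE := by rw [hNEdef, Finset.mem_filter]; exact ⟨Finset.mem_univ i, hBi⟩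
    have hi0le : i₀ ≤ i := NE.min'_le i hiNE
    have hile1 : i ≤ i₁ := NE.le_max' i hiNE
    by_cases hui : u ∈ B i
    · exact ⟨u, p.start_mem_support, hui⟩
    by_cases hwi : w ∈ B i
    · exact ⟨w, p.end_mem_support, hwi⟩
    have hleft : ∀ j, u ∈ B j → j < i := by
      intro j hj
      by_contra hc'
      exact hui (hPD.2.1 u i₀ i j hi0le (le_of_not_gt hc') hu hj)
    have hnright : ¬(∀ j, w ∈ B j → j < i) := by
      intro h
      exact absurd (h i₁ hw) (not_lt.mpr hile1)
    exact pd_cross hPD i p hpS hleft hnright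
  -- width of anything avoiding the main path
  have hwid : ∀ (E : Set V), E ⊆ S \ Rset →
      ∀ i, ((B i).filter (fun x => x ∈ E)).card ≤ k := by
    intro E hE i
    by_cases hfe : ((B i).filter (fun x => x ∈ E)).Nonempty
    · obtain ⟨v, hv⟩ := hfe
      rw [Finset.mem_filter] at hv
      obtain ⟨x, hx1, hx2⟩ := hhit i ⟨v, hv.1⟩
      have hxE : x ∉ E := fun hc' => (hE hc').2 hx1
      have hsub : ((B i).filter (fun x => x ∈ E)) ⊆ (B i).erase x := by
        intro y hy
        rw [Finset.mem_filter] at hy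
        refine Finset.mem_erase.mpr ⟨?_, hy.1⟩
        intro h; exact hxE (h ▸ hy.2)
      have := Finset.card_le_card hsub
      rw [Finset.card_erase_of_mem hx2] at this
      have := hW i
      omega
    · rw [Finset.not_nonempty_iff_eq_empty] at hfe
      rw [hfe]; simp
  -- outside the main path, k is positive
  have hk1 : ∀ v, v ∈ S \ Rset → 1 ≤ k := by
    intro v hv
    obtain ⟨i, hvi⟩ := hPD.1 v hv.1
    obtain ⟨x, hx1, hx2⟩ := hhit i ⟨v, hvi⟩
    have hne : v ≠ x := fun h => hv.2 (h ▸ hx1)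
    have : 1 < (B i).card := Finset.one_lt_card.mpr ⟨v, hvi, x, hx2, hne⟩
    have := hW i
    omega
  -- the recursive call for subsets avoiding the main path
  have hrec : ∀ (E : Set V) (cE : V), E ⊆ S \ Rset → WConnOn T E → cE ∈ E →
      HasPPP T E cE (2 * k - 2) := by
    intro E cE hE hEconn hcE
    have hk : 1 ≤ k := hk1 cE (hE hcE)
    have hpd' : PD T E (fun i => (B i).filter (fun x => x ∈ E)) := by
      refine ⟨?_, ?_, ?_, ?_⟩
      · intro v hv
        obtain ⟨i, hi⟩ := hPD.1 v ((hE hv).1)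
        exact ⟨i, Finset.mem_filter.mpr ⟨hi, hv⟩⟩
      · intro v i j k' hij hjk hvi hvk
        rw [Finset.mem_filter] at hvi hvk ⊢
        exact ⟨hPD.2.1 v i j k' hij hjk hvi.1 hvk.1, hvi.2⟩
      · intro a b ha hb hab
        obtain ⟨i, hi1, hi2⟩ := hPD.2.2.1 a b ((hE ha).1) ((hE hb).1) hab
        exact ⟨i, Finset.mem_filter.mpr ⟨hi1, ha⟩, Finset.mem_filter.mpr ⟨hi2, hb⟩⟩
      · intro i x hx
        rw [Finset.mem_coe, Finset.mem_filter] at hx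
        exact hx.2
    have hw' : ∀ i, ((B i).filter (fun x => x ∈ E)).card ≤ (k - 1) + 1 := by
      intro i
      have := hwid E hE i
      omega
    have := IH (k - 1) (by omega) E hEconn m _ hpd' hw' cE hcE
    exact this.mono (by omega)
  -- the path sequence of the main path
  obtain ⟨hfp, hfpimg⟩ := pathseq_of_walk p hp
  have hReq : Rset = {v | ∃ i ≤ p.length, p.getVert i = v} := hfpimg.symm
  by_cases hcR : c ∈ Rset
  · -- c is on the main path
    by_cases hall : S ⊆ Rset
    · -- S is a single path
      have hSR : S = Rset := Set.Subset.antisymm hall hRS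
      exact (single hfp (hSR.trans hReq) hcS).mono (by omega)
    · -- there are components; k ≥ 1
      obtain ⟨v₀, hv₀S, hv₀R⟩ := Set.not_subset.mp hall
      have hk : 1 ≤ k := hk1 v₀ ⟨hv₀S, hv₀R⟩
      have hglue := glue hT hS hRS hfp hReq hcR (2 * k - 1) ?_
      · have he : 2 * k - 1 + 1 = 2 * k := by omega
        rwa [he] at hglue
      · intro E hE
        obtain ⟨a, ha, b, hb, hab⟩ := exists_exit hS hRS hE hRne
        refine ⟨a, ha, ?_, b, hb, hab.symm⟩
        exact (hrec E a hE.subset hE.wconn ha).mono (by omega)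
  · -- c is off the main path
    have hcA : c ∈ S \ Rset := ⟨hcS, hcR⟩
    have hk : 1 ≤ k := hk1 c hcA
    -- the component of c and its attachment
    obtain ⟨a₀, ha₀, r, hrR, har⟩ :=
      exists_exit hS hRS (⟨c, hcA, rfl⟩ : IsCompOf T (S \ Rset) (Comp T (S \ Rset) c)) hRne
    have hrp : r ∈ p.support := hrR
    have hspec := p.take_spec hrp
    set q1 := p.takeUntil r hrp with hq1def
    set q2 := p.dropUntil r hrp with hq2def
    have hq1path : q1.IsPath := hp.takeUntil hrp
    have hq2path : q2.IsPath := hp.dropUntil hrp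
    have hpmem : ∀ x, x ∈ p.support ↔ x ∈ q1.support ∨ x ∈ q2.support := by
      intro x
      rw [← hspec]
      exact SimpleGraph.Walk.mem_support_append_iff q1 q2
    have hq1q2 : ∀ x, x ∈ q1.support → x ∈ q2.support → x = r := by
      intro x hx1 hx2
      have hnd := hp.support_nodup
      rw [← hspec, SimpleGraph.Walk.support_append] at hnd
      have hdisj := List.disjoint_of_nodup_append hnd
      by_contra hxr
      have : x ∈ q2.support.tail := by
        have := q2.support_eq_cons
        rw [this, List.mem_cons] at hx2
        rcases hx2 with h | h
        · exact absurd h hxr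
        · exact h
      exact hdisj hx1 this
    -- the path from c to the attachment inside the component
    obtain ⟨w1raw, hw1raw⟩ := comp_wconn c (mem_comp_self hcA) a₀ ha₀
    set w1 := w1raw.bypass with hw1def
    have hw1path : w1.IsPath := w1raw.bypass_isPath
    have hw1sub : ∀ x ∈ w1.support, x ∈ Comp T (S \ Rset) c :=
      fun x hx => hw1raw x (w1raw.support_bypass_subset hx)
    -- assemble the new root path R' = w1 + edge + q2
    have ha₀q2 : a₀ ∉ q2.support := by
      intro hc'
      have : a₀ ∈ Rset := (hpmem a₀).mpr (Or.inr hc')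
      exact (comp_subset ha₀).2 this
    have hconsPath : (SimpleGraph.Walk.cons har q2).IsPath :=
      (SimpleGraph.Walk.cons_isPath_iff har q2).mpr ⟨hq2path, ha₀q2⟩
    set R' := w1.append (SimpleGraph.Walk.cons har q2) with hR'def
    have hR'path : R'.IsPath := by
      refine isPath_append_of_disjoint hw1path hconsPath ?_
      intro x hx hx'
      have hxC : x ∈ Comp T (S \ Rset) c := hw1sub x hx
      have : x ∈ q2.support := by
        simpa [SimpleGraph.Walk.support_cons] using hx'
      exact (comp_subset hxC).2 ((hpmem x).mpr (Or.inr this))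
    have hR'mem : ∀ x, x ∈ R'.support ↔ x ∈ w1.support ∨ x ∈ q2.support := by
      intro x
      rw [hR'def, SimpleGraph.Walk.mem_support_append_iff]
      constructor
      · rintro (h | h)
        · exact Or.inl h
        · simp only [SimpleGraph.Walk.support_cons, List.mem_cons] at h
          rcases h with rfl | h
          · exact Or.inl w1.end_mem_support
          · exact Or.inr h
      · rintro (h | h)
        · exact Or.inl h
        · refine Or.inr ?_
          simp [SimpleGraph.Walk.support_cons, h]
    set R'set : Set V := {x | x ∈ R'.support} with hR'setdef
    have hR'S : R'set ⊆ S := by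
      intro x hx
      rcases (hR'mem x).mp hx with h | h
      · exact ((comp_subset (hw1sub x h)).1)
      · exact hpS x ((hpmem x).mpr (Or.inr h))
    have hcR' : c ∈ R'set := R'.start_mem_support
    obtain ⟨hfR', hfR'img⟩ := pathseq_of_walk R' hR'path
    have hR'eq : R'set = {v | ∃ i ≤ R'.length, R'.getVert i = v} := hfR'img.symm
    have hR'ne : R'set.Nonempty := ⟨c, hcR'⟩
    -- standard treatment of components of S \ R'set avoiding the old path
    have hstd : ∀ E, IsCompOf T (S \ R'set) E → E ⊆ S \ Rset →
        ∃ cE ∈ E, HasPPP T E cE (2 * k - 1) ∧ ∃ rr ∈ R'set, T.Adj rr cE := by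
      intro E hE hERs
      obtain ⟨a, ha, b, hb, hab⟩ := exists_exit hS hR'S hE hR'ne
      exact ⟨a, ha, (hrec E a hERs hE.wconn ha).mono (by omega), b, hb, hab.symm⟩
    by_cases hnil : q1.reverse.Nil
    · -- the attachment vertex is the start of the main path: R ⊆ R'
      have hq1sup : q1.reverse.support = [r] := by
        rw [← SimpleGraph.Walk.nil_iff_support_eq]
        exact hnil
      have hq1r : ∀ x, x ∈ q1.support → x = r := by
        intro x hx
        have : x ∈ q1.reverse.support := by
          rw [SimpleGraph.Walk.support_reverse, List.mem_reverse]
          exact hx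
        rw [hq1sup] at this
        simpa using this
      have hsub : ∀ E, IsCompOf T (S \ R'set) E → E ⊆ S \ Rset := by
        intro E hE x hx
        have hxA' : x ∈ S \ R'set := hE.subset hx
        refine ⟨hxA'.1, ?_⟩
        intro hxR
        apply hxA'.2
        rcases (hpmem x).mp hxR with h | h
        · have := hq1r x h
          subst this
          exact (hR'mem x).mpr (Or.inr q2.start_mem_support)
        · exact (hR'mem x).mpr (Or.inr h)
      have hglue := glue hT hS hR'S hfR' hR'eq hcR' (2 * k - 1)
        (fun E hE => hstd E hE (hsub E hE))
      have he : 2 * k - 1 + 1 = 2 * k := by omega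
      rwa [he] at hglue
    · -- the main path continues past the attachment: build the side piece D
      rw [SimpleGraph.Walk.not_nil_iff] at hnil
      obtain ⟨p', hadj1, tail, hq1r⟩ := hnil
      have hq1mem : ∀ x, x ∈ q1.support ↔ x = r ∨ x ∈ tail.support := by
        intro x
        rw [← List.mem_reverse, ← SimpleGraph.Walk.support_reverse, hq1r,
          SimpleGraph.Walk.support_cons, List.mem_cons]
      have htailpath : tail.IsPath := by
        have := hq1path.reverse
        rw [hq1r] at this
        exact this.of_cons
      have hrtail : r ∉ tail.support := by
        have := hq1path.reverse
        rw [hq1r] at this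
        exact ((SimpleGraph.Walk.cons_isPath_iff _ _).mp this).2
      have hrR' : r ∈ R'set := (hR'mem r).mpr (Or.inr q2.start_mem_support)
      -- the tail lies outside R'
      have htailA' : ∀ x ∈ tail.support, x ∈ S \ R'set := by
        intro x hx
        have hxq1 : x ∈ q1.support := (hq1mem x).mpr (Or.inr hx)
        have hxR : x ∈ Rset := (hpmem x).mpr (Or.inl hxq1)
        refine ⟨hpS x hxR, ?_⟩
        intro hxR'
        rcases (hR'mem x).mp hxR' with h | h
        · exact ((comp_subset (hw1sub x h)).2) hxR
        · have := hq1q2 x hxq1 h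
          subst this
          exact hrtail hx
      have hp'A' : p' ∈ S \ R'set := htailA' p' tail.start_mem_support
      set Dset := Comp T (S \ R'set) p' with hDdef
      have hDcompOf : IsCompOf T (S \ R'set) Dset := ⟨p', hp'A', rfl⟩
      have htailD : ∀ x ∈ tail.support, x ∈ Dset :=
        fun x hx => mem_comp_of_support tail htailA' hx
      set tailset : Set V := {x | x ∈ tail.support} with htailsetdef
      have htailsub : tailset ⊆ Dset := fun x hx => htailD x hx
      obtain ⟨hftail, htailimg⟩ := pathseq_of_walk tail htailpath
      have hReqtail : tailset = {v | ∃ i ≤ tail.length, tail.getVert i = v} := htailimg.symm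
      -- components of Dset \ tailset avoid the old main path
      have hDcomp : ∀ E', IsCompOf T (Dset \ tailset) E' →
          ∃ cE ∈ E', HasPPP T E' cE (2 * k - 2) ∧ ∃ rr ∈ tailset, T.Adj rr cE := by
        intro E' hE'
        obtain ⟨a, ha, b, hb, hab⟩ :=
          exists_exit comp_wconn htailsub hE' ⟨p', tail.start_mem_support⟩
        have hE'sub : E' ⊆ S \ Rset := by
          intro x hx
          have hx1 : x ∈ Dset \ tailset := hE'.subset hx
          have hx2 : x ∈ S \ R'set := comp_subset hx1.1
          refine ⟨hx2.1, ?_⟩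
          intro hxR
          rcases (hpmem x).mp hxR with h | h
          · rcases (hq1mem x).mp h with h' | h'
            · subst h'
              exact hx2.2 hrR'
            · exact hx1.2 h'
          · exact hx2.2 ((hR'mem x).mpr (Or.inr h))
        exact ⟨a, ha, hrec E' a hE'sub hE'.wconn ha, b, hb, hab.symm⟩
      have hD : HasPPP T Dset p' (2 * k - 1) := by
        have := glue hT comp_wconn htailsub hftail hReqtail
          (tail.start_mem_support : p' ∈ tailset) (2 * k - 2) hDcomp
        have he : 2 * k - 2 + 1 = 2 * k - 1 := by omega
        rwa [he] at this
      -- final gluing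
      have hfinal : ∀ E, IsCompOf T (S \ R'set) E →
          ∃ cE ∈ E, HasPPP T E cE (2 * k - 1) ∧ ∃ rr ∈ R'set, T.Adj rr cE := by
        intro E hE
        by_cases hp'E : p' ∈ E
        · have hED : E = Dset := hE.eq_comp_of_mem hp'E
          exact ⟨p', hp'E, hED ▸ hD, r, hrR', hadj1⟩
        · refine hstd E hE ?_
          intro x hx
          have hxA' : x ∈ S \ R'set := hE.subset hx
          refine ⟨hxA'.1, ?_⟩
          intro hxR
          rcases (hpmem x).mp hxR with h | h
          · rcases (hq1mem x).mp h with h' | h'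
            · subst h'
              exact hxA'.2 hrR'
            · -- x is in the tail, hence in Dset; so E = Dset ∋ p', contradiction
              exfalso
              apply hp'E
              have hxD : x ∈ Dset := htailD x h'
              have : E = Dset := (hE.eq_comp_of_mem hx).trans
                ((hDcompOf.eq_comp_of_mem hxD).symm)
              rw [this]
              exact mem_comp_self hp'A'
          · exact hxA'.2 ((hR'mem x).mpr (Or.inr h))
      have hglue := glue hT hS hR'S hfR' hR'eq hcR' (2 * k - 1) hfinal
      have he : 2 * k - 1 + 1 = 2 * k := by omega
      rwa [he] at hglue

end PfAux


/-- Every finite tree of pathwidth `k` has a path-partition of height at most `2k`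
(every vertex of the indexing rooted tree is at distance at most `2k` from the root). -/
theorem stmt5 {V : Type} (hV : Finite V) (T : SimpleGraph V) (hT : T.IsTree)
    (k : ℕ) (hpw : pathwidth T = k) :
    ∃ (ι : Type) (PP : PathPartition T ι),
      ∀ x : ι, PP.Q.dist PP.root x ≤ 2 * k := by
  classical
  have : Fintype V := Fintype.ofFinite V
  have hne : Nonempty V := hT.isConnected.nonempty
  have htriv : PathwidthLE T (Fintype.card V - 1) := by
    refine ⟨1, fun _ => Finset.univ, ⟨?_, ?_, ?_⟩, ?_⟩
    · intro v; exact ⟨0, Finset.mem_univ v⟩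
    · intro v i j kk _ _ _ _; exact Finset.mem_univ v
    · intro u v _; exact ⟨0, Finset.mem_univ u, Finset.mem_univ v⟩
    · intro i
      have : 1 ≤ Fintype.card V := Fintype.card_pos
      rw [Finset.card_univ]
      omega
  have hpwle : PathwidthLE T k := by
    have := Nat.sInf_mem (⟨Fintype.card V - 1, htriv⟩ : {k | PathwidthLE T k}.Nonempty)
    rwa [show sInf {k | PathwidthLE T k} = k from hpw] at this
  obtain ⟨m, B, hdecomp, hwidth⟩ := hpwle
  have hPD : PfAux.PD T Set.univ B :=
    ⟨fun v _ => hdecomp.1 v, hdecomp.2.1, fun u v _ _ h => hdecomp.2.2 u v h,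
      fun i x _ => Set.mem_univ x⟩
  have hconn : PfAux.WConnOn T Set.univ := by
    intro u _ v _
    obtain ⟨p⟩ := hT.isConnected u v
    exact ⟨p, fun x _ => Set.mem_univ x⟩
  obtain ⟨c⟩ := hne
  obtain ⟨ι, root, P, h1, h2, h3, h4, h5, h6, h7⟩ :=
    PfAux.mainInd hT k Set.univ hconn m B hPD hwidth c (Set.mem_univ c)
  exact ⟨ι, ⟨PfAux.Qf T P, root, h5, P, h1, fun v => h3 v (Set.mem_univ v), h4,
    fun x y => Iff.rfl⟩, h7⟩
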